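/- Let R = {(x,y,t) ∈ H^1 : x = 0} and u(x,y,t) = t - 2xy on H^1. Then ∇u = -4xY + T and ∇_H u = -4xY, so that {p ∈ R : ∇_H u(p) = 0 and ∇u(p) ≠ 0} = R, and S^3(R) = ∞. In particular, the statement 'the set where ∇_H u vanishes but ∇u does not is S^{2n+1}-negligible on rectifiable sets' fails for n = 1. -/

import Mathlib

open MeasureTheory Filter Set
open scoped ENNReal NNReal Topology

namespace Heis

/-- A point of the Heisenberg group `ℍⁿ ≅ ℝ^{2n+1}`, coordinates
`(x_1,…,x_n, y_1,…,y_n, t)`. -/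
abbrev Hpt (n : ℕ) := EuclideanSpace ℝ (Fin (2*n+1))

/-- A horizontal vector, written in the orthonormal frame `X_1,…,X_n,Y_1,…,Y_n`. -/
abbrev HVec (n : ℕ) := EuclideanSpace ℝ (Fin (2*n))

noncomputable def mk (n : ℕ) (f : Fin (2*n+1) → ℝ) : Hpt n :=
  (EuclideanSpace.equiv (Fin (2*n+1)) ℝ).symm f

noncomputable def mkH (n : ℕ) (f : Fin (2*n) → ℝ) : HVec n :=
  (EuclideanSpace.equiv (Fin (2*n)) ℝ).symm f

def tI (n : ℕ) : Fin (2*n+1) := ⟨2*n, by omega⟩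
def xI (n : ℕ) (j : Fin n) : Fin (2*n+1) := ⟨j.1, by have := j.isLt; omega⟩
def yI (n : ℕ) (j : Fin n) : Fin (2*n+1) := ⟨n + j.1, by have := j.isLt; omega⟩

/-- The height function `𝗁(p) = p₁ = x₁`. -/
def hgt (n : ℕ) (p : Hpt n) : ℝ := p ⟨0, by omega⟩

/-- The Heisenberg group product. -/
noncomputable def hmul (n : ℕ) (p q : Hpt n) : Hpt n :=
  mk n fun i => if i.1 = 2*n then
      p i + q i + 2 * ∑ j : Fin n, (p (yI n j) * q (xI n j) - p (xI n j) * q (yI n j))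
    else p i + q i

/-- The Heisenberg group inverse. -/
noncomputable def hinv (n : ℕ) (p : Hpt n) : Hpt n := mk n fun i => -(p i)

/-- The anisotropic dilation `δ_λ(z,t) = (λz, λ²t)`. -/
noncomputable def dil (n : ℕ) (l : ℝ) (p : Hpt n) : Hpt n :=
  mk n fun i => if i.1 = 2*n then l^2 * p i else l * p i

/-- The point `s·e₁ = (s,0,…,0)`. -/
noncomputable def sE1 (n : ℕ) (s : ℝ) : Hpt n := mk n fun i => if i.1 = 0 then s else 0

/-- `|z|²` for `p = (z,t)`. -/
def zSq (n : ℕ) (p : Hpt n) : ℝ := ∑ j : Fin n, ((p (xI n j))^2 + (p (yI n j))^2)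

/-- The Korányi norm `‖(z,t)‖_K = (|z|⁴ + t²)^{1/4}`. -/
noncomputable def kNorm (n : ℕ) (p : Hpt n) : ℝ :=
  ((zSq n p)^2 + (p (tI n))^2) ^ ((1:ℝ)/4)

/-- The box norm `‖(z,t)‖_∞ = max(|z|, |t|^{1/2})`. -/
noncomputable def boxNorm (n : ℕ) (p : Hpt n) : ℝ :=
  max (Real.sqrt (zSq n p)) (Real.sqrt |p (tI n)|)

/-- Korányi ball centered at the origin. -/
def ballK (n : ℕ) (r : ℝ) : Set (Hpt n) := {p | kNorm n p < r}

/-- Korányi ball centered at `p`. -/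
def ballKc (n : ℕ) (p : Hpt n) (r : ℝ) : Set (Hpt n) := {q | kNorm n (hmul n (hinv n p) q) < r}

/-- Box-norm ball `U_r(p)`. -/
def uBall (n : ℕ) (p : Hpt n) (r : ℝ) : Set (Hpt n) := {q | boxNorm n (hmul n (hinv n p) q) < r}

/-- The vertical hyperplane `𝕎 = {𝗁 = 0}`. -/
def Wset (n : ℕ) : Set (Hpt n) := {p | hgt n p = 0}

/-- The Korányi disk `D_r ⊂ 𝕎`. -/
def Ddisk (n : ℕ) (r : ℝ) : Set (Hpt n) := {p | hgt n p = 0 ∧ kNorm n p < r}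

/-- The intrinsic cylinder `C_r = D_r ∗ (-r,r)`. -/
def cylC (n : ℕ) (r : ℝ) : Set (Hpt n) :=
  {q | ∃ w, (hgt n w = 0 ∧ kNorm n w < r) ∧ ∃ s : ℝ, -r < s ∧ s < r ∧ q = hmul n w (sE1 n s)}

/-- Partial derivative along the `i`-th coordinate. -/
noncomputable def pd (n : ℕ) (i : Fin (2*n+1)) (u : Hpt n → ℝ) (p : Hpt n) : ℝ :=
  fderiv ℝ u p (EuclideanSpace.single i 1)

/-- `X_j u = ∂_{x_j} u + 2 y_j ∂_t u`. -/
noncomputable def Xd (n : ℕ) (j : Fin n) (u : Hpt n → ℝ) (p : Hpt n) : ℝ :=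
  pd n (xI n j) u p + 2 * p (yI n j) * pd n (tI n) u p

/-- `Y_j u = ∂_{y_j} u - 2 x_j ∂_t u`. -/
noncomputable def Yd (n : ℕ) (j : Fin n) (u : Hpt n → ℝ) (p : Hpt n) : ℝ :=
  pd n (yI n j) u p - 2 * p (xI n j) * pd n (tI n) u p

/-- `T u = ∂_t u`. -/
noncomputable def Td (n : ℕ) (u : Hpt n → ℝ) (p : Hpt n) : ℝ := pd n (tI n) u p

/-- The `j`-th horizontal derivative (`X` for `j < n`, `Y` otherwise). -/
noncomputable def hDeriv (n : ℕ) (j : Fin (2*n)) (u : Hpt n → ℝ) (p : Hpt n) : ℝ :=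
  if h : j.1 < n then Xd n ⟨j.1, h⟩ u p
  else Yd n ⟨j.1 - n, by have := j.isLt; omega⟩ u p

/-- The horizontal gradient `∇_H u` in frame coordinates. -/
noncomputable def hGrad (n : ℕ) (u : Hpt n → ℝ) (p : Hpt n) : HVec n :=
  mkH n fun i => hDeriv n i u p

/-- The full Riemannian gradient `∇u` in frame coordinates. -/
noncomputable def fGrad (n : ℕ) (u : Hpt n → ℝ) (p : Hpt n) : Hpt n :=
  mk n fun i => if h : i.1 < 2*n then hDeriv n ⟨i.1, h⟩ u p else Td n u p

/-- The Euclidean (coordinate) gradient. -/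
noncomputable def eGrad (n : ℕ) (u : Hpt n → ℝ) (p : Hpt n) : Hpt n :=
  mk n fun i => pd n i u p

/-- Horizontal divergence `div_g φ = Σ_j X_j φ_j + Y_j φ_{n+j}`. -/
noncomputable def hdiv (n : ℕ) (φ : Hpt n → HVec n) (p : Hpt n) : ℝ :=
  ∑ j : Fin n,
    (Xd n j (fun q => φ q ⟨j.1, by have := j.isLt; omega⟩) p
      + Yd n j (fun q => φ q ⟨n + j.1, by have := j.isLt; omega⟩) p)

/-- Embedding of a horizontal vector into the full frame. -/
noncomputable def embedH (n : ℕ) (v : HVec n) : Hpt n :=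
  mk n fun i => if h : i.1 < 2*n then v ⟨i.1, h⟩ else 0

/-- Horizontal part of a full frame vector. -/
noncomputable def hpart (n : ℕ) (v : Hpt n) : HVec n :=
  mkH n fun i => v ⟨i.1, by have := i.isLt; omega⟩

/-- Real inner product. -/
noncomputable def rinner {E : Type*} [NormedAddCommGroup E] [InnerProductSpace ℝ E]
    (x y : E) : ℝ := inner ℝ x y

/-- Admissible test vector fields for the `H`-perimeter in `A`. -/
def Admissible (n : ℕ) (A : Set (Hpt n)) (φ : Hpt n → HVec n) : Prop :=
  ContDiff ℝ 1 φ ∧ HasCompactSupport φ ∧ tsupport φ ⊆ A ∧ ∀ p, ‖φ p‖ ≤ 1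

/-- The variational `H`-perimeter of `E` in `A`. -/
noncomputable def hPer (n : ℕ) (E A : Set (Hpt n)) : ℝ≥0∞ :=
  ⨆ (φ : Hpt n → HVec n) (_ : Admissible n A φ),
    ENNReal.ofReal (∫ p in E, hdiv n φ p)

/-- `E` has locally finite `H`-perimeter in `Ω`. -/
def LocFinitePer (n : ℕ) (Ω E : Set (Hpt n)) : Prop :=
  ∀ A : Set (Hpt n), IsOpen A → IsCompact (closure A) → closure A ⊆ Ω → hPer n E A < ⊤

/-- `(μ, ν)` represents the `H`-perimeter measure and horizontal inner normal of `E`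
in `Ω` (Gauss–Green / Riesz representation). -/
def IsPerimRep (n : ℕ) (Ω E : Set (Hpt n)) (μ : Measure (Hpt n)) (ν : Hpt n → HVec n) : Prop :=
  (∀ᵐ p ∂μ, ‖ν p‖ = 1) ∧ μ Ωᶜ = 0 ∧ (∀ K, IsCompact K → K ⊆ Ω → μ K < ⊤) ∧
  ∀ φ : Hpt n → HVec n, ContDiff ℝ 1 φ → HasCompactSupport φ → tsupport φ ⊆ Ω →
    ∫ p, rinner (φ p) (ν p) ∂μ = -∫ p in E, hdiv n φ p

/-- The horizontal vector `ν = -X₁`. -/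
noncomputable def nuNeg (n : ℕ) : HVec n := mkH n fun i => if i.1 = 0 then -1 else 0

/-- The horizontal vector `X₁`. -/
noncomputable def eX1 (n : ℕ) : HVec n := mkH n fun i => if i.1 = 0 then 1 else 0

/-- The cylindrical excess of `(μ,ν)` in `C_r`, with respect to `ν₀ = -X₁`. -/
noncomputable def excess (n : ℕ) (μ : Measure (Hpt n)) (ν : Hpt n → HVec n) (r : ℝ) : ℝ :=
  (2 * r^(2*n+1))⁻¹ * ∫ p in cylC n r, ‖ν p - nuNeg n‖^2 ∂μ

/-- The measure-theoretic boundary of `E`. -/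
def mBdry (n : ℕ) (E : Set (Hpt n)) : Set (Hpt n) :=
  {p | ∀ ρ : ℝ, 0 < ρ → 0 < volume (E ∩ ballKc n p ρ) ∧ 0 < volume (ballKc n p ρ \ E)}

/-- The `H`-reduced boundary associated with a perimeter representation `(μ,ν)`. -/
noncomputable def reducedBdry (n : ℕ) (μ : Measure (Hpt n)) (ν : Hpt n → HVec n) :
    Set (Hpt n) :=
  {p | (∀ ρ : ℝ, 0 < ρ → 0 < μ (uBall n p ρ)) ∧ ‖ν p‖ = 1 ∧
    Tendsto (fun ρ : ℝ => (μ (uBall n p ρ)).toReal⁻¹ • ∫ q in uBall n p ρ, ν q ∂μ)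
      (nhdsWithin 0 (Ioi 0)) (nhds (ν p))}

/-- `E` is a `(Λ,r)`-minimum of the `H`-perimeter in `Ω`. -/
def LambdaMin (n : ℕ) (Λ : ℝ) (r : ℝ≥0∞) (Ω E : Set (Hpt n)) : Prop :=
  LocFinitePer n Ω E ∧
  ∀ (F : Set (Hpt n)) (p : Hpt n) (s : ℝ), 0 < s → ENNReal.ofReal s < r →
    MeasurableSet F →
    IsCompact (closure (symmDiff E F)) → closure (symmDiff E F) ⊆ ballKc n p s →
    IsCompact (closure (ballKc n p s)) → closure (ballKc n p s) ⊆ Ω →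
    hPer n E (ballKc n p s) ≤ hPer n F (ballKc n p s) +
      ENNReal.ofReal Λ * volume (symmDiff E F)

/-- The spherical Hausdorff-type measure `𝒮^s` built from box-norm balls
(normalization constant omitted). -/
noncomputable def sMeas (n : ℕ) (s : ℝ) (E : Set (Hpt n)) : ℝ≥0∞ :=
  ⨆ (δ : ℝ) (_ : 0 < δ), ⨅ (c : ℕ → Hpt n) (r : ℕ → ℝ)
    (_ : (∀ i, 0 < r i ∧ r i < δ) ∧ E ⊆ ⋃ i, uBall n (c i) (r i)),
    ∑' i, ENNReal.ofReal (r i ^ s)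

/-- `f` is of class `C¹_H` on the open set `U`, with continuous horizontal
gradient `gf` (in the distributional sense). -/
def IsC1H (n : ℕ) (U : Set (Hpt n)) (f : Hpt n → ℝ) (gf : Hpt n → HVec n) : Prop :=
  ContinuousOn f U ∧ ContinuousOn gf U ∧
  ∀ φ : Hpt n → ℝ, ContDiff ℝ 1 φ → HasCompactSupport φ → tsupport φ ⊆ U →
    ∀ j : Fin (2*n), ∫ p in U, gf p j * φ p = -∫ p in U, f p * hDeriv n j φ p

/-- `S` is an `H`-regular hypersurface. -/
def HRegular (n : ℕ) (S : Set (Hpt n)) : Prop :=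
  ∀ p ∈ S, ∃ r : ℝ, 0 < r ∧ ∃ f gf, IsC1H n (uBall n p r) f gf ∧
    S ∩ uBall n p r = {q ∈ uBall n p r | f q = 0} ∧ gf p ≠ 0

/-- `S` is an `H`-regular hypersurface with horizontal unit normal `ν`. -/
def HRegularNormal (n : ℕ) (S : Set (Hpt n)) (ν : Hpt n → HVec n) : Prop :=
  ∀ p ∈ S, ∃ r : ℝ, 0 < r ∧ ∃ f gf, IsC1H n (uBall n p r) f gf ∧
    S ∩ uBall n p r = {q ∈ uBall n p r | f q = 0} ∧
    ∀ q ∈ S ∩ uBall n p r, gf q ≠ 0 ∧ ν q = ‖gf q‖⁻¹ • gf q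

/-- `R` is `𝒮^{2n+1}`-rectifiable. -/
def SRect (n : ℕ) (R : Set (Hpt n)) : Prop :=
  ∃ S : ℕ → Set (Hpt n), (∀ j, HRegular n (S j)) ∧
    sMeas n (2*n+1) (R \ ⋃ j, S j) = 0

/-- `ν` is a horizontal unit normal of the `𝒮^{2n+1}`-rectifiable set `R`,
obtained from a covering by `H`-regular hypersurfaces. -/
def IsRectNormal (n : ℕ) (R : Set (Hpt n)) (ν : Hpt n → HVec n) : Prop :=
  ∃ (S : ℕ → Set (Hpt n)) (νs : ℕ → Hpt n → HVec n),
    (∀ j, HRegularNormal n (S j) (νs j)) ∧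
    sMeas n (2*n+1) (R \ ⋃ j, S j) = 0 ∧
    ∀ j, ∀ p ∈ R ∩ S j, (∀ i < j, p ∉ S i) → ν p = νs j p

/-- The Riemannian surface measure `σ` of the level set `{u = s}`, expressed via the
Euclidean `2n`-dimensional Hausdorff measure with density `‖∇_g u‖_g / ‖∇_euc u‖`. -/
noncomputable def levelMeasure (n : ℕ) (u : Hpt n → ℝ) (s : ℝ) : Measure (Hpt n) :=
  ((μH[(2*(n:ℝ))] : Measure (Hpt n)).restrict (u ⁻¹' {s})).withDensity
    fun p => ENNReal.ofReal (‖fGrad n u p‖ / ‖eGrad n u p‖)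

/-- Admissible sections of `HΣ^s`, `Σ^s = {u = s}`: horizontal, tangent, `C¹_c(A)`,
with `g`-norm at most 1. -/
def SliceAdmissible (n : ℕ) (u : Hpt n → ℝ) (s : ℝ) (A : Set (Hpt n))
    (φ : Hpt n → HVec n) : Prop :=
  ContDiff ℝ 1 φ ∧ HasCompactSupport φ ∧ tsupport φ ⊆ A ∧ (∀ p, ‖φ p‖ ≤ 1) ∧
  ∀ p, u p = s → rinner (φ p) (hGrad n u p) = 0

/-- The `H`-perimeter of `E ∩ Σ^s` inside the hypersurface `Σ^s = {u = s}`,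
relative to `A`. -/
noncomputable def slicePer (n : ℕ) (u : Hpt n → ℝ) (s : ℝ) (E A : Set (Hpt n)) : ℝ≥0∞ :=
  ⨆ (φ : Hpt n → HVec n) (_ : SliceAdmissible n u s A φ),
    ENNReal.ofReal (∫ p in E, hdiv n φ p ∂(levelMeasure n u s))

/-- `g`-orthogonal projection of a full tangent vector field `N` onto `HΣ`,
`Σ = {f = 0}`. -/
noncomputable def projHSigma (n : ℕ) (f : Hpt n → ℝ) (N : Hpt n → Hpt n) (p : Hpt n) :
    HVec n :=
  hpart n (N p) -
    (rinner (hpart n (N p)) (hGrad n f p) / ‖hGrad n f p‖^2) • hGrad n f p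

/-- The group projection `π : ℍⁿ → 𝕎`, `p = π(p) ∗ (𝗁(p)e₁)`. -/
noncomputable def projW (n : ℕ) (p : Hpt n) : Hpt n := hmul n p (sE1 n (-(hgt n p)))

/-- Identification of `𝕎` with `ℝ^{2n}` by dropping the first coordinate. -/
noncomputable def dropFirst (n : ℕ) (p : Hpt n) : HVec n :=
  mkH n fun i => p ⟨i.1 + 1, by have := i.isLt; omega⟩

/-- `|ẑ|²`, the squared norm of `(z₂,…,z_n)`. -/
def hatZSq (n : ℕ) (p : Hpt n) : ℝ :=
  ∑ j : Fin n, if j.1 = 0 then 0 else ((p (xI n j))^2 + (p (yI n j))^2)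

/-- The domain `Ω_s = (-se₁) ∗ D₁ ∗ (se₁) ⊂ 𝕎`. -/
def OmegaS (n : ℕ) (s : ℝ) : Set (Hpt n) :=
  {p | hgt n p = 0 ∧
    ((p ⟨n, by omega⟩)^2 + hatZSq n p)^2 + (p (tI n) - 4*s*(p ⟨n, by omega⟩))^2 < 1}

/-- Admissible sections for the horizontal perimeter in the slice `{𝗁 = s}`:
no `X₁`-component. -/
def WAdmissible (n : ℕ) (A : Set (Hpt n)) (φ : Hpt n → HVec n) : Prop :=
  ContDiff ℝ 1 φ ∧ HasCompactSupport φ ∧ tsupport φ ⊆ A ∧ (∀ p, ‖φ p‖ ≤ 1) ∧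
  ∀ p, ∀ i : Fin (2*n), i.1 = 0 → φ p i = 0

/-- The horizontal perimeter `μ_F^s` of `F` in the slice `{𝗁 = s}`, relative to `A`. -/
noncomputable def wPer (n : ℕ) (s : ℝ) (F A : Set (Hpt n)) : ℝ≥0∞ :=
  ⨆ (φ : Hpt n → HVec n) (_ : WAdmissible n A φ),
    ENNReal.ofReal (∫ p in F, hdiv n φ p ∂((μH[(2*(n:ℝ))] : Measure (Hpt n)).restrict
      {q | hgt n q = s}))



/-! ### Auxiliary material for Statement 10 -/

section Counterexample10

noncomputable def uu : Hpt 1 → ℝ := fun p => p 2 - 2 * p 0 * p 1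

noncomputable def Du (p : Hpt 1) : Hpt 1 →L[ℝ] ℝ :=
  EuclideanSpace.proj 2 -
    ((2 * p 1) • EuclideanSpace.proj 0 + (2 * p 0) • EuclideanSpace.proj 1)

lemma Du_apply (p v : Hpt 1) : Du p v = v 2 - (2 * p 1 * v 0 + 2 * p 0 * v 1) := rfl

lemma hasFDeriv_uu (p : Hpt 1) : HasFDerivAt uu (Du p) p := by
  have h0 : HasFDerivAt (fun q : Hpt 1 => q 0) (EuclideanSpace.proj (𝕜 := ℝ) (0 : Fin 3)) p :=
    (EuclideanSpace.proj (𝕜 := ℝ) (0 : Fin 3)).hasFDerivAt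
  have h1 : HasFDerivAt (fun q : Hpt 1 => q 1) (EuclideanSpace.proj (𝕜 := ℝ) (1 : Fin 3)) p :=
    (EuclideanSpace.proj (𝕜 := ℝ) (1 : Fin 3)).hasFDerivAt
  have h2 : HasFDerivAt (fun q : Hpt 1 => q 2) (EuclideanSpace.proj (𝕜 := ℝ) (2 : Fin 3)) p :=
    (EuclideanSpace.proj (𝕜 := ℝ) (2 : Fin 3)).hasFDerivAt
  have hm := (h0.const_mul 2).mul h1
  have := h2.sub hm
  refine this.congr_fderiv ?_
  ext v
  simp [Du_apply]
  ring

lemma fderiv_uu (p : Hpt 1) : fderiv ℝ uu p = Du p := (hasFDeriv_uu p).fderiv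

lemma pd_uu (i : Fin (2*1+1)) (p : Hpt 1) :
    pd 1 i uu p = (if i.1 = 2 then 1 else 0)
      - (2 * p 1 * (if i.1 = 0 then 1 else 0) + 2 * p 0 * (if i.1 = 1 then 1 else 0)) := by
  rw [pd, fderiv_uu, Du_apply]
  have e0 : (EuclideanSpace.single i (1:ℝ)) 0 = if i.1 = 0 then 1 else 0 := by
    fin_cases i <;> simp
  have e1 : (EuclideanSpace.single i (1:ℝ)) 1 = if i.1 = 1 then 1 else 0 := by
    fin_cases i <;> simp
  have e2 : (EuclideanSpace.single i (1:ℝ)) 2 = if i.1 = 2 then 1 else 0 := by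
    fin_cases i <;> simp
  rw [e0, e1, e2]

lemma hDeriv_uu (j : Fin (2*1)) (p : Hpt 1) :
    hDeriv 1 j uu p = if j.1 = 1 then -4 * p 0 else 0 := by
  have hx : ∀ j : Fin 1, xI 1 j = 0 := by intro j; fin_cases j; rfl
  have hy : ∀ j : Fin 1, yI 1 j = 1 := by intro j; fin_cases j; rfl
  have htt : tI 1 = 2 := rfl
  fin_cases j
  · simp only [hDeriv, Xd, Fin.mk_zero]
    norm_num
    rw [hx, hy, htt, pd_uu, pd_uu]
    norm_num
  · simp only [hDeriv, Yd]
    norm_num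
    rw [hx, hy, htt, pd_uu, pd_uu]
    norm_num
    ring

lemma hGrad_uu (p : Hpt 1) :
    hGrad 1 uu p = mkH 1 (fun i => if i.1 = 1 then -4 * p 0 else 0) := by
  ext i
  show hDeriv 1 i uu p = _
  rw [hDeriv_uu]
  rfl

lemma fGrad_uu (p : Hpt 1) :
    fGrad 1 uu p = mk 1 (fun i => if i.1 = 1 then -4 * p 0 else if i.1 = 2 then 1 else 0) := by
  ext i
  show (if h : i.1 < 2*1 then hDeriv 1 ⟨i.1, h⟩ uu p else Td 1 uu p) = _
  fin_cases i
  · rw [dif_pos (by norm_num)]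
    rw [hDeriv_uu]; rfl
  · rw [dif_pos (by norm_num)]
    rw [hDeriv_uu]; rfl
  · rw [dif_neg (by norm_num)]
    show Td 1 uu p = 1
    rw [Td, show tI 1 = 2 from rfl, pd_uu]
    norm_num

noncomputable def emb (z : ℝ × ℝ) : Hpt 1 :=
  mk 1 fun j => if j.1 = 0 then 0 else if j.1 = 1 then z.1 else z.2

lemma emb_mem_uBall {z : ℝ × ℝ} {c : Hpt 1} {r : ℝ} (hr : 0 < r)
    (h : emb z ∈ uBall 1 c r) :
    z ∈ Ioo (c 1 - r) (c 1 + r) ×ˢ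
      Ioo ((c 2 - 2 * c 0 * c 1) - 3*r^2)
          ((c 2 - 2 * c 0 * c 1) + 3*r^2) := by
  obtain ⟨y, t⟩ := z
  set a := c 0 with ha0
  set b := c 1 with hb0
  set c₃ := c 2 with hc0
  have h1 : boxNorm 1 (hmul 1 (hinv 1 c) (emb (y, t))) < r := h
  have hz : zSq 1 (hmul 1 (hinv 1 c) (emb (y, t))) = a^2 + (y - b)^2 := by
    simp [zSq, hmul, hinv, emb, mk, xI, yI, tI, Fin.sum_univ_one]
    ring
  have ht : (hmul 1 (hinv 1 c) (emb (y, t))) (tI 1) = t - c₃ + 2 * a * y := by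
    simp [hmul, hinv, emb, mk, xI, yI, tI, Fin.sum_univ_one]
    ring
  rw [boxNorm, hz, ht] at h1
  have hA : a^2 + (y-b)^2 < r^2 := by
    have := (max_lt_iff.1 h1).1
    rwa [Real.sqrt_lt' hr] at this
  have hB : |t - c₃ + 2*a*y| < r^2 := by
    have := (max_lt_iff.1 h1).2
    rwa [Real.sqrt_lt' hr] at this
  have ha : |a| < r := by nlinarith [sq_nonneg (y-b), abs_nonneg a, sq_abs a]
  have hy : |y - b| < r := by nlinarith [sq_nonneg a, abs_nonneg (y-b), sq_abs (y-b)]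
  constructor
  · simp only [Set.mem_Ioo]
    have := abs_lt.1 hy; constructor <;> linarith [this.1, this.2]
  · simp only [Set.mem_Ioo]
    have h2 : |2*a*(y-b)| < 2*r^2 := by
      rw [abs_mul, abs_mul, abs_two]
      nlinarith [abs_nonneg a, abs_nonneg (y-b)]
    have h3 : |t - (c₃ - 2*a*b)| < 3*r^2 := by
      have he : t - (c₃ - 2*a*b) = (t - c₃ + 2*a*y) - (2*a*(y-b)) := by ring
      rw [he]
      calc |(t - c₃ + 2*a*y) - (2*a*(y-b))| ≤ |t - c₃ + 2*a*y| + |2*a*(y-b)| := abs_sub _ _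
      _ < r^2 + 2*r^2 := by linarith
      _ = 3*r^2 := by ring
    have := abs_lt.1 h3; constructor <;> linarith [this.1, this.2]

lemma tsum_top (c : ℕ → Hpt 1) (r : ℕ → ℝ) (hr : ∀ i, 0 < r i)
    (hcov : {p : Hpt 1 | p 0 = 0} ⊆ ⋃ i, uBall 1 (c i) (r i)) :
    ∑' i, ENNReal.ofReal (r i ^ (3:ℝ)) = ⊤ := by
  have hconv : ∀ i, ENNReal.ofReal (r i ^ (3:ℝ)) = ENNReal.ofReal (r i ^ (3:ℕ)) := by
    intro i
    rw [show ((3:ℝ)) = ((3:ℕ):ℝ) by norm_num, Real.rpow_natCast]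
  set B : ℕ → Set (ℝ × ℝ) := fun i =>
    Ioo (c i 1 - r i) (c i 1 + r i) ×ˢ
      Ioo ((c i 2 - 2 * c i 0 * c i 1) - 3*(r i)^2)
          ((c i 2 - 2 * c i 0 * c i 1) + 3*(r i)^2) with hB
  have hU : (univ : Set (ℝ × ℝ)) ⊆ ⋃ i, B i := by
    intro z _
    have hz : emb z ∈ {p : Hpt 1 | p 0 = 0} := by
      show (emb z) 0 = 0
      rfl
    obtain ⟨i, hi⟩ := mem_iUnion.1 (hcov hz)
    exact mem_iUnion.2 ⟨i, emb_mem_uBall (hr i) hi⟩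
  have hvol : ∀ i, volume (B i) ≤ ENNReal.ofReal 12 * ENNReal.ofReal (r i ^ (3:ℕ)) := by
    intro i
    rw [hB]
    rw [Measure.volume_eq_prod ℝ ℝ, Measure.prod_prod, Real.volume_Ioo, Real.volume_Ioo]
    have e1 : c i 1 + r i - (c i 1 - r i) = 2 * r i := by ring
    have e2 : (c i 2 - 2 * c i 0 * c i 1) + 3*(r i)^2 -
        ((c i 2 - 2 * c i 0 * c i 1) - 3*(r i)^2) = 6 * (r i)^2 := by ring
    rw [e1, e2, ← ENNReal.ofReal_mul (by linarith [hr i]), ← ENNReal.ofReal_mul (by norm_num)]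
    apply ENNReal.ofReal_le_ofReal
    ring_nf
    nlinarith [le_of_lt (hr i), pow_pos (hr i) 3]
  have htop : (⊤ : ℝ≥0∞) ≤ ENNReal.ofReal 12 * ∑' i, ENNReal.ofReal (r i ^ (3:ℕ)) := by
    have h1 : (⊤ : ℝ≥0∞) = volume (univ : Set (ℝ × ℝ)) := by
      rw [← univ_prod_univ, Measure.volume_eq_prod ℝ ℝ, Measure.prod_prod, Real.volume_univ]
      simp
    calc (⊤ : ℝ≥0∞) = volume (univ : Set (ℝ × ℝ)) := h1
      _ ≤ volume (⋃ i, B i) := measure_mono hU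
      _ ≤ ∑' i, volume (B i) := measure_iUnion_le _
      _ ≤ ∑' i, ENNReal.ofReal 12 * ENNReal.ofReal (r i ^ (3:ℕ)) := ENNReal.tsum_le_tsum hvol
      _ = ENNReal.ofReal 12 * ∑' i, ENNReal.ofReal (r i ^ (3:ℕ)) := ENNReal.tsum_mul_left
  have hsum : ∑' i, ENNReal.ofReal (r i ^ (3:ℕ)) = ⊤ := by
    by_contra hne
    have : ENNReal.ofReal 12 * ∑' i, ENNReal.ofReal (r i ^ (3:ℕ)) < ⊤ :=
      ENNReal.mul_lt_top ENNReal.ofReal_lt_top (lt_top_iff_ne_top.2 hne)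
    exact (ne_of_lt this) (top_le_iff.1 htop)
  calc ∑' i, ENNReal.ofReal (r i ^ (3:ℝ)) = ∑' i, ENNReal.ofReal (r i ^ (3:ℕ)) :=
        tsum_congr hconv
    _ = ⊤ := hsum

lemma sMeas_R_top : sMeas 1 3 {p : Hpt 1 | p 0 = 0} = ⊤ := by
  rw [eq_top_iff, sMeas]
  refine le_trans ?_ (le_iSup _ (1:ℝ))
  refine le_trans ?_ (le_iSup _ one_pos)
  refine le_iInf fun c => le_iInf fun r => le_iInf fun hc => ?_
  rw [tsum_top c r (fun i => (hc.1 i).1) hc.2]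

end Counterexample10

/-- the counterexample in `ℍ¹`: for `R = {x = 0}` and
`u = t - 2xy` one has `∇u = -4xY + T`, `∇_H u = -4xY`, the whole of `R`
is characteristic, and `𝒮³(R) = ∞`. -/
theorem characteristic_counterexample_H1 :
    ∀ (x0 : Fin (2*1+1)) (y0 : Fin (2*1+1)) (t0 : Fin (2*1+1)),
    x0 = ⟨0, by omega⟩ → y0 = ⟨1, by omega⟩ → t0 = ⟨2, by omega⟩ →
    ∀ (R : Set (Hpt 1)) (u : Hpt 1 → ℝ),
    R = {p | p x0 = 0} → u = (fun p => p t0 - 2 * p x0 * p y0) →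
    (∀ p : Hpt 1, fGrad 1 u p
        = mk 1 (fun i => if i.1 = 1 then -4 * p x0 else if i.1 = 2 then 1 else 0)) ∧
    (∀ p : Hpt 1, hGrad 1 u p = mkH 1 (fun i => if i.1 = 1 then -4 * p x0 else 0)) ∧
    {p ∈ R | hGrad 1 u p = 0 ∧ fGrad 1 u p ≠ 0} = R ∧
    sMeas 1 3 R = ⊤ := by
  intro x0 y0 t0 hx0 hy0 ht0 R u hR hu
  subst hx0 hy0 ht0 hR hu
  have hu' : (fun p : Hpt 1 => p ⟨2, by omega⟩ - 2 * p ⟨0, by omega⟩ * p ⟨1, by omega⟩) = uu :=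
    rfl
  refine ⟨fun p => fGrad_uu p, fun p => hGrad_uu p, ?_, sMeas_R_top⟩
  ext p
  simp only [Set.mem_setOf_eq, Set.mem_sep_iff]
  constructor
  · exact fun h => h.1
  · intro hp
    refine ⟨hp, ?_, ?_⟩
    · rw [show (fun p : Hpt 1 => p ⟨2, by omega⟩ - 2 * p ⟨0, by omega⟩ * p ⟨1, by omega⟩) = uu
        from rfl, hGrad_uu]
      ext i
      show (if i.1 = 1 then -4 * p 0 else 0) = 0
      have hp0 : p 0 = 0 := hp
      rw [hp0]
      simp
    · intro h
      have h2 := congrArg (fun v : Hpt 1 => v 2) h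
      rw [show (fun p : Hpt 1 => p ⟨2, by omega⟩ - 2 * p ⟨0, by omega⟩ * p ⟨1, by omega⟩) = uu
        from rfl, fGrad_uu] at h2
      have : (1 : ℝ) = 0 := h2
      norm_num at this

end Heis
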